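/- Let q > 2 be a prime power and let s, t be natural numbers with t ≥ 1. If a, b, c, d are all nonzero elements of 𝔽_q and f(x,y,z) = a + b·x + c·z + d·x^s·y^t·z, then Z(f) ≤ q·gcd(t, q−1) + (q−1)(q−3). -/

import Mathlib

open Finset

private lemma card_pow_eq_one_gcd {G : Type*} [CommGroup G] [Fintype G] [IsCyclic G]
    [DecidableEq G] (m : ℕ) :
    (Finset.univ.filter fun y : G => y ^ m = 1).card = Nat.gcd m (Fintype.card G) := by
  set n := Fintype.card G with hn
  set d := Nat.gcd m n with hd
  have hdn : d ∣ n := Nat.gcd_dvd_right m n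
  have hnpos : 0 < n := Fintype.card_pos
  have hdpos : 0 < d := Nat.gcd_pos_of_pos_right m hnpos
  have hset : (Finset.univ.filter fun y : G => y ^ m = 1)
      = (Finset.univ.filter fun y : G => y ^ d = 1) := by
    ext y
    simp only [Finset.mem_filter, Finset.mem_univ, true_and]
    constructor
    · intro h
      exact orderOf_dvd_iff_pow_eq_one.mp
        (Nat.dvd_gcd (orderOf_dvd_of_pow_eq_one h) orderOf_dvd_card)
    · intro h
      obtain ⟨k, hk⟩ := Nat.gcd_dvd_left m n
      rw [← hd] at hk
      rw [hk, pow_mul, h, one_pow]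
  rw [hset]
  refine le_antisymm ?_ ?_
  · have := IsCyclic.card_pow_eq_one_le (α := G) hdpos
    convert this using 2
  · obtain ⟨g, hg⟩ := IsCyclic.exists_generator (α := G)
    have hord : orderOf g = n := by
      rw [orderOf_eq_card_of_forall_mem_zpowers hg, Nat.card_eq_fintype_card]
    haveI : Fintype (Subgroup.zpowers (g ^ (n / d)) : Set G) := Fintype.ofFinite _
    have hpow : (g ^ (n / d)) ^ d = 1 := by
      rw [← pow_mul, Nat.div_mul_cancel hdn, ← hord, pow_orderOf_eq_one]
    have hsub : (Subgroup.zpowers (g ^ (n / d)) : Set G).toFinset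
        ⊆ (Finset.univ.filter fun y : G => y ^ d = 1) := by
      intro y hy
      simp only [Set.mem_toFinset, SetLike.mem_coe, Subgroup.mem_zpowers_iff] at hy
      obtain ⟨k, rfl⟩ := hy
      simp only [Finset.mem_filter, Finset.mem_univ, true_and]
      rw [← zpow_natCast, ← zpow_mul, mul_comm, zpow_mul, zpow_natCast, hpow, one_zpow]
    have hcard : (Subgroup.zpowers (g ^ (n / d)) : Set G).toFinset.card = d := by
      simp only [Set.toFinset_card, SetLike.coe_sort_coe]
      rw [← Nat.card_eq_fintype_card, Nat.card_zpowers, orderOf_pow, hord,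
        Nat.gcd_eq_right (Nat.div_dvd_of_dvd hdn), Nat.div_div_self hdn hnpos.ne']
    calc d = _ := hcard.symm
      _ ≤ _ := Finset.card_le_card hsub

private lemma exists_pow_eq_root {G : Type*} [CommGroup G] [Fintype G] [IsCyclic G]
    (t : ℕ) (u : G)
    (hu : u ^ (Fintype.card G / Nat.gcd t (Fintype.card G)) = 1) :
    ∃ v : G, v ^ t = u := by
  obtain ⟨g, hg⟩ := IsCyclic.exists_generator (α := G)
  set n := Fintype.card G with hn
  set d := Nat.gcd t n with hd
  have hnpos : 0 < n := Fintype.card_pos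
  have hdn : d ∣ n := Nat.gcd_dvd_right t n
  have hdpos : 0 < d := Nat.gcd_pos_of_pos_right t hnpos
  have hord : orderOf g = n := by
    rw [orderOf_eq_card_of_forall_mem_zpowers hg, Nat.card_eq_fintype_card]
  obtain ⟨m, hm⟩ := Subgroup.mem_zpowers_iff.mp (hg u)
  obtain ⟨e, he⟩ := hdn
  have hepos : 0 < e := Nat.pos_of_ne_zero fun h0 => by
    rw [h0, mul_zero] at he; omega
  have hnd : n / d = e := by rw [he, Nat.mul_div_cancel_left _ hdpos]
  have h1 : g ^ (m * (e : ℤ)) = 1 := by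
    rw [zpow_mul, hm, ← hnd, zpow_natCast, hu]
  have h2 : ((n : ℕ) : ℤ) ∣ m * (e : ℤ) := by
    have := orderOf_dvd_iff_zpow_eq_one.mpr h1
    rwa [hord] at this
  have h3 : (d : ℤ) ∣ m := by
    rw [he] at h2
    push_cast at h2
    exact (mul_dvd_mul_iff_right (by exact_mod_cast hepos.ne' : (e : ℤ) ≠ 0)).mp h2
  obtain ⟨m', hm'⟩ := h3
  have hbez := Nat.gcd_eq_gcd_ab t n
  rw [← hd] at hbez
  refine ⟨g ^ (m' * Nat.gcdA t n), ?_⟩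
  have hgn : g ^ ((n : ℕ) : ℤ) = 1 := by
    rw [zpow_natCast, ← hord, pow_orderOf_eq_one]
  have hexp : m' * Nat.gcdA t n * (t : ℤ) = (d : ℤ) * m' + (n : ℤ) * (-(m' * Nat.gcdB t n)) := by
    linear_combination (-m') * hbez
  have h4 : g ^ ((n : ℤ) * -(m' * Nat.gcdB t n)) = 1 := by
    rw [zpow_mul, hgn, one_zpow]
  rw [← zpow_natCast (g ^ (m' * Nat.gcdA t n)) t, ← zpow_mul, hexp, zpow_add, h4, mul_one,
    ← hm', hm]

private lemma card_pow_eq_pow {F : Type} [Field F] [Fintype F] [DecidableEq F] (t : ℕ) (u : Fˣ) :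
    (Finset.univ.filter fun y : Fˣ => (y : F) ^ t = (u : F) ^ t).card
      = Nat.gcd t (Fintype.card Fˣ) := by
  classical
  have h1 : (Finset.univ.filter fun y : Fˣ => (y : F) ^ t = (u : F) ^ t)
      = (Finset.univ.filter fun y : Fˣ => y ^ t = u ^ t) := by
    ext y
    simp only [Finset.mem_filter, Finset.mem_univ, true_and, Units.ext_iff,
      Units.val_pow_eq_pow_val]
  have h2 : (Finset.univ.filter fun y : Fˣ => y ^ t = 1).image (fun y => y * u)
      = Finset.univ.filter fun y : Fˣ => y ^ t = u ^ t := by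
    ext y
    simp only [Finset.mem_image, Finset.mem_filter, Finset.mem_univ, true_and]
    constructor
    · rintro ⟨w, hw, rfl⟩
      rw [mul_pow, hw, one_mul]
    · intro hy
      refine ⟨y * u⁻¹, ?_, by simp⟩
      rw [mul_pow, hy, inv_pow, mul_inv_cancel]
  rw [h1, ← h2, Finset.card_image_of_injective _ (mul_left_injective u)]
  exact card_pow_eq_one_gcd t

/-- `Zf f` is the number of points `(x,y,z) ∈ (Fˣ)³` with `f (x,y,z) = 0`. -/
noncomputable def Zf {F : Type} [Field F] [Fintype F]
    (f : Fˣ × Fˣ × Fˣ → F) : ℕ :=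
  Nat.card {v : Fˣ × Fˣ × Fˣ // f v = 0}

/-- The polynomial `a + b·x + c·z + d·x^s·y^t·z` from `T(s,t)`,
evaluated at `(x,y,z) = (v.1, v.2.1, v.2.2) ∈ (Fˣ)³`. -/
def fT {F : Type} [Field F] (s t : ℕ) (a b c d : F)
    (v : Fˣ × Fˣ × Fˣ) : F :=
  a + b * (v.1 : F) + c * (v.2.2 : F) +
    d * (v.1 : F) ^ s * (v.2.1 : F) ^ t * (v.2.2 : F)

/-- If all of `a, b, c, d` are nonzero, then
`Z(f) ≤ q·gcd(t, q−1) + (q−1)(q−3)`. -/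
theorem stmt2 (F : Type) [Field F] [Fintype F] (s t : ℕ)
    (hq : 2 < Fintype.card F) (ht : 1 ≤ t)
    (a b c d : F) (ha : a ≠ 0) (hb : b ≠ 0) (hc : c ≠ 0) (hd : d ≠ 0) :
    Zf (fT s t a b c d) ≤
      Fintype.card F * Nat.gcd t (Fintype.card F - 1) +
        (Fintype.card F - 1) * (Fintype.card F - 3) := by
  classical
  set q := Fintype.card F with hq'
  set n := Fintype.card Fˣ with hn'
  have hnq : n = q - 1 := Fintype.card_units F
  have hq3 : 3 ≤ q := hq
  have hn2 : 2 ≤ n := by omega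
  set g := Nat.gcd t n with hg'
  have hgn : g ∣ n := Nat.gcd_dvd_right t n
  have hg1 : 1 ≤ g := Nat.gcd_pos_of_pos_right t (by omega)
  -- counting function for t-th roots
  set N : F → ℕ := fun cc => (Finset.univ.filter fun y : Fˣ => (y : F) ^ t = cc).card with hN
  have hNpow : ∀ u : Fˣ, N ((u : F) ^ t) = g := by
    intro u
    rw [hN]
    simp only
    rw [card_pow_eq_pow t u, ← hn', ← hg']
  have hNsum : ∑ cc : F, N cc = n := by
    rw [hn', ← Finset.card_univ,
      Finset.card_eq_sum_card_fiberwise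
        (f := fun y : Fˣ => (y : F) ^ t) (t := Finset.univ) (fun y _ => Finset.mem_univ _)]
  -- geometric data
  set W : Fˣ → Fˣ → F :=
    fun x z => -(a + b * (x : F) + c * (z : F)) / (d * (x : F) ^ s * (z : F)) with hW
  set β : Fˣ → F := fun x => -c / (d * (x : F) ^ s) with hβ
  have hDne : ∀ x : Fˣ, d * (x : F) ^ s ≠ 0 :=
    fun x => mul_ne_zero hd (pow_ne_zero _ (Units.ne_zero x))
  have hDzne : ∀ x z : Fˣ, d * (x : F) ^ s * (z : F) ≠ 0 :=
    fun x z => mul_ne_zero (hDne x) (Units.ne_zero z)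
  have hfT : ∀ x y z : Fˣ, (fT s t a b c d (x, y, z) = 0 ↔ (y : F) ^ t = W x z) := by
    intro x y z
    rw [hW]
    simp only [fT]
    rw [eq_div_iff (hDzne x z)]
    constructor
    · intro h; linear_combination h
    · intro h; linear_combination h
  have hZ : Zf (fT s t a b c d) = ∑ x : Fˣ, ∑ z : Fˣ, N (W x z) := by
    rw [Zf, Nat.card_eq_fintype_card, Fintype.card_subtype, Finset.card_filter,
      Fintype.sum_prod_type]
    refine Finset.sum_congr rfl fun x _ => ?_
    rw [Fintype.sum_prod_type, Finset.sum_comm]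
    refine Finset.sum_congr rfl fun z _ => ?_
    rw [hN]
    simp only
    rw [Finset.card_filter]
    refine Finset.sum_congr rfl fun y _ => ?_
    exact if_congr (hfT x y z) rfl rfl
  -- the special point x₀
  have hx₀ne : -(a / b) ≠ 0 := neg_ne_zero.mpr (div_ne_zero ha hb)
  set x₀ : Fˣ := Units.mk0 (-(a / b)) hx₀ne with hx₀
  have hx₀v : (x₀ : F) = -(a / b) := rfl
  have habx₀ : a + b * (x₀ : F) = 0 := by
    rw [hx₀v]; field_simp; ring
  have hax : ∀ x : Fˣ, x ≠ x₀ → a + b * (x : F) ≠ 0 := by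
    intro x hx h
    apply hx
    apply Units.ext
    rw [hx₀v]
    field_simp
    linear_combination h
  have hWx₀ : ∀ z : Fˣ, W x₀ z = β x₀ := by
    intro z
    simp only [hW, hβ]
    rw [div_eq_div_iff (hDzne x₀ z) (hDne x₀)]
    linear_combination (-(d * ((x₀ : F)) ^ s)) * habx₀
  have hWinj : ∀ x : Fˣ, x ≠ x₀ → ∀ z₁ z₂ : Fˣ, W x z₁ = W x z₂ → z₁ = z₂ := by
    intro x hx z₁ z₂ h
    simp only [hW] at h
    rw [div_eq_div_iff (hDzne x z₁) (hDzne x z₂)] at h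
    have h2 : (a + b * (x : F)) * (d * (x : F) ^ s) * (z₁ : F)
        = (a + b * (x : F)) * (d * (x : F) ^ s) * (z₂ : F) := by
      linear_combination h
    exact Units.ext (mul_left_cancel₀ (mul_ne_zero (hax x hx) (hDne x)) h2)
  have hWne : ∀ x : Fˣ, x ≠ x₀ → ∀ z : Fˣ, W x z ≠ β x := by
    intro x hx z h
    simp only [hW, hβ] at h
    rw [div_eq_div_iff (hDzne x z) (hDne x)] at h
    have h2 : (a + b * (x : F)) * (d * (x : F) ^ s) = 0 := by
      linear_combination -h
    exact (mul_ne_zero (hax x hx) (hDne x)) h2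
  -- column sums
  have hcol : ∀ x : Fˣ, x ≠ x₀ → (∑ z : Fˣ, N (W x z)) + N (β x) ≤ n := by
    intro x hx
    have h1 : ∑ z : Fˣ, N (W x z) = ∑ cc ∈ Finset.univ.image (fun z : Fˣ => W x z), N cc :=
      (Finset.sum_image fun z₁ _ z₂ _ h => hWinj x hx z₁ z₂ h).symm
    have h2 : Finset.univ.image (fun z : Fˣ => W x z) ⊆ Finset.univ.erase (β x) := by
      intro cc hcc
      simp only [Finset.mem_image, Finset.mem_univ, true_and] at hcc
      obtain ⟨z, hz⟩ := hcc
      exact Finset.mem_erase.mpr ⟨hz ▸ hWne x hx z, Finset.mem_univ _⟩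
    calc (∑ z : Fˣ, N (W x z)) + N (β x)
        = (∑ cc ∈ Finset.univ.image (fun z : Fˣ => W x z), N cc) + N (β x) := by rw [h1]
      _ ≤ (∑ cc ∈ Finset.univ.erase (β x), N cc) + N (β x) :=
          Nat.add_le_add_right (Finset.sum_le_sum_of_subset h2) _
      _ = ∑ cc : F, N cc := by
          rw [add_comm]; exact Finset.add_sum_erase _ _ (Finset.mem_univ _)
      _ = n := hNsum
  have hcol₀ : ∑ z : Fˣ, N (W x₀ z) = n * N (β x₀) := by
    rw [Finset.sum_congr rfl fun z _ => congrArg N (hWx₀ z), Finset.sum_const,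
      Finset.card_univ, smul_eq_mul, ← hn']
  have herasecard : (Finset.univ.erase x₀).card = n - 1 := by
    rw [Finset.card_erase_of_mem (Finset.mem_univ _), Finset.card_univ, ← hn']
  have herasesum : ∑ x ∈ Finset.univ.erase x₀, n = (n - 1) * n := by
    rw [Finset.sum_const, smul_eq_mul, herasecard]
  -- the key bound
  have key : (∑ z : Fˣ, N (W x₀ z)) + (∑ x ∈ Finset.univ.erase x₀, ∑ z : Fˣ, N (W x z))
      ≤ (n + 1) * g + n * (n - 2) := by
    by_cases h₀ : N (β x₀) = 0
    · -- easy case : no t-th root of β x₀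
      have hS : (∑ x ∈ Finset.univ.erase x₀, ∑ z : Fˣ, N (W x z)) ≤ (n - 1) * n := by
        rw [← herasesum]
        exact Finset.sum_le_sum fun x hx =>
          le_trans (Nat.le_add_right _ _) (hcol x (Finset.ne_of_mem_erase hx))
      rw [hcol₀, h₀, mul_zero, zero_add]
      refine le_trans hS ?_
      zify [show 1 ≤ n by omega, show 2 ≤ n from hn2]
      nlinarith [(show (1 : ℤ) ≤ (g : ℤ) by exact_mod_cast hg1),
        (show (2 : ℤ) ≤ (n : ℤ) by exact_mod_cast hn2)]
    · -- main case
      have hpos : 0 < (Finset.univ.filter fun y : Fˣ => (y : F) ^ t = β x₀).card := by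
        rw [hN] at h₀
        simp only at h₀
        omega
      obtain ⟨y₀, hy₀mem⟩ := Finset.card_pos.mp hpos
      have hy₀ : (y₀ : F) ^ t = β x₀ := (Finset.mem_filter.mp hy₀mem).2
      have hNβ₀ : N (β x₀) = g := by rw [← hy₀]; exact hNpow y₀
      set M := s * (n / g) with hM
      set K := (Finset.univ.erase x₀).filter (fun x : Fˣ => (x₀ * x⁻¹) ^ M = 1) with hK
      have hKsub : K ⊆ Finset.univ.erase x₀ := Finset.filter_subset _ _
      have hKval : ∀ x ∈ K, N (β x) = g := by
        intro x hxK
        rw [hK, Finset.mem_filter] at hxK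
        obtain ⟨hx1, hx2⟩ := hxK
        obtain ⟨v, hv⟩ := exists_pow_eq_root t ((x₀ * x⁻¹) ^ s) (by
          rw [← hn', ← hg', ← pow_mul, ← hM]
          exact hx2)
        have hv' : ((v : F)) ^ t = ((x₀ : F) * (x : F)⁻¹) ^ s := by
          rw [← Units.val_pow_eq_pow_val, hv, Units.val_pow_eq_pow_val, Units.val_mul,
            Units.val_inv_eq_inv_val]
        have hy₀' : ((y₀ : F)) ^ t = -c / (d * (x₀ : F) ^ s) := by
          rw [hy₀]
        have hβx : β x = ((y₀ * v : Fˣ) : F) ^ t := by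
          simp only [hβ]
          rw [Units.val_mul, mul_pow, hy₀', hv']
          have hx0 : (x : F) ≠ 0 := Units.ne_zero x
          have hx₀0 : (x₀ : F) ≠ 0 := Units.ne_zero x₀
          field_simp
          rw [div_pow, mul_div_assoc', mul_div_cancel_left₀ _ (pow_ne_zero _ hx0)]
        rw [hβx]
        exact hNpow (y₀ * v)
      set k := K.card with hk
      have hklb : n ≤ (k + 1) * g := by
        have hK' : K = (Finset.univ.filter fun x : Fˣ => (x₀ * x⁻¹) ^ M = 1).erase x₀ := by
          ext x
          simp only [hK, Finset.mem_filter, Finset.mem_erase, Finset.mem_univ, true_and]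
          tauto
        have hcardbij : (Finset.univ.filter fun x : Fˣ => (x₀ * x⁻¹) ^ M = 1).card
            = (Finset.univ.filter fun w : Fˣ => w ^ M = 1).card := by
          apply Finset.card_bij' (fun x _ => x₀ * x⁻¹) (fun w _ => w⁻¹ * x₀)
          · intro x hx
            simp only [Finset.mem_filter, Finset.mem_univ, true_and] at hx ⊢
            exact hx
          · intro w hw
            simp only [Finset.mem_filter, Finset.mem_univ, true_and] at hw ⊢
            have : x₀ * (w⁻¹ * x₀)⁻¹ = w := by group
            rw [this]
            exact hw
          · intro x _
            group
          · intro w _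
            group
        have hfil : (Finset.univ.filter fun w : Fˣ => w ^ M = 1).card = Nat.gcd M n := by
          rw [card_pow_eq_one_gcd M, ← hn']
        have hdvd : n / g ∣ Nat.gcd M n :=
          Nat.dvd_gcd (hM ▸ dvd_mul_left (n / g) s) (Nat.div_dvd_of_dvd hgn)
        have hglb : n / g ≤ Nat.gcd M n :=
          Nat.le_of_dvd (Nat.gcd_pos_of_pos_right _ (by omega)) hdvd
        have hx₀mem : x₀ ∈ (Finset.univ.filter fun x : Fˣ => (x₀ * x⁻¹) ^ M = 1) := by
          simp only [Finset.mem_filter, Finset.mem_univ, true_and]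
          rw [mul_inv_cancel, one_pow]
        have hkk : k + 1 = (Finset.univ.filter fun x : Fˣ => (x₀ * x⁻¹) ^ M = 1).card := by
          have hCpos : 0 < (Finset.univ.filter fun x : Fˣ => (x₀ * x⁻¹) ^ M = 1).card :=
            Finset.card_pos.mpr ⟨x₀, hx₀mem⟩
          rw [hk, hK', Finset.card_erase_of_mem hx₀mem]
          omega
        have hng : n / g ≤ k + 1 := by
          rw [hkk, hcardbij, hfil]; exact hglb
        calc n = (n / g) * g := (Nat.div_mul_cancel hgn).symm
          _ ≤ (k + 1) * g := Nat.mul_le_mul_right g hng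
      have hsum1 : (∑ x ∈ Finset.univ.erase x₀, ∑ z : Fˣ, N (W x z)) + k * g
          ≤ (n - 1) * n := by
        have e1 : ∑ x ∈ K, N (β x) = k * g := by
          rw [Finset.sum_congr rfl hKval, Finset.sum_const, smul_eq_mul, hk]
        have e2 : ∑ x ∈ K, N (β x) ≤ ∑ x ∈ Finset.univ.erase x₀, N (β x) :=
          Finset.sum_le_sum_of_subset hKsub
        have e3 : (∑ x ∈ Finset.univ.erase x₀, ∑ z : Fˣ, N (W x z))
            + ∑ x ∈ Finset.univ.erase x₀, N (β x)
            = ∑ x ∈ Finset.univ.erase x₀, ((∑ z : Fˣ, N (W x z)) + N (β x)) :=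
          (Finset.sum_add_distrib).symm
        have e4 : ∑ x ∈ Finset.univ.erase x₀, ((∑ z : Fˣ, N (W x z)) + N (β x))
            ≤ (n - 1) * n := by
          rw [← herasesum]
          exact Finset.sum_le_sum fun x hx => hcol x (Finset.ne_of_mem_erase hx)
        omega
      rw [hcol₀, hNβ₀]
      zify [show 1 ≤ n by omega, show 2 ≤ n from hn2] at hsum1 ⊢
      have hklb' : (n : ℤ) ≤ (k + 1) * g := by exact_mod_cast hklb
      linarith
  calc Zf (fT s t a b c d) = ∑ x : Fˣ, ∑ z : Fˣ, N (W x z) := hZ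
    _ = (∑ z : Fˣ, N (W x₀ z)) + ∑ x ∈ Finset.univ.erase x₀, ∑ z : Fˣ, N (W x z) :=
        (Finset.add_sum_erase Finset.univ _ (Finset.mem_univ x₀)).symm
    _ ≤ (n + 1) * g + n * (n - 2) := key
    _ = q * Nat.gcd t (q - 1) + (q - 1) * (q - 3) := by
        rw [hg', hnq]
        have e1 : q - 1 + 1 = q := by omega
        have e2 : q - 1 - 2 = q - 3 := by omega
        rw [e1, e2]
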